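/- Let X be a reflexive real Banach space such that both X and its dual X* are strictly convex. Let P : X → X be a contractive projection (P linear, P ∘ P = P, ‖P(x)‖ ≤ ‖x‖ for all x) and let x ∈ X. Then x belongs to the range of P if and only if there exists f ∈ X* with f(x) = ‖x‖² = ‖f‖² and f ∘ P = f. -/

import Mathlib

/-- Let `X` be a reflexive real Banach space with `X` and `X*` strictly convex, and let
`P` be a contractive projection on `X`. Then `x ∈ Ran P` if and only if some normalized
duality functional `f` for `x` (i.e. `f(x) = ‖x‖² = ‖f‖²`) satisfies `f ∘ P = f`. -/
theorem mem_range_contractive_projection_iff_duality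
    {X : Type*} [NormedAddCommGroup X] [NormedSpace ℝ X] [CompleteSpace X]
    [StrictConvexSpace ℝ X] [StrictConvexSpace ℝ (StrongDual ℝ X)]
    (hrefl : Function.Surjective (NormedSpace.inclusionInDoubleDual ℝ X))
    (P : X →L[ℝ] X) (hcontr : ∀ z, ‖P z‖ ≤ ‖z‖) (hproj : ∀ z, P (P z) = P z)
    (x : X) :
    x ∈ Set.range P ↔
      ∃ f : StrongDual ℝ X,
        f x = ‖x‖ ^ 2 ∧ ‖f‖ = ‖x‖ ∧ ∀ z, f (P z) = f z := by
  constructor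
  · rintro ⟨y, rfl⟩
    rcases eq_or_ne (P y) 0 with h0 | h0
    · exact ⟨0, by simp [h0], by simp [h0], by simp⟩
    obtain ⟨g, hg1, hgx⟩ := exists_dual_vector ℝ (P y) (norm_ne_zero_iff.mpr h0)
    refine ⟨‖P y‖ • (g.comp P), ?_, ?_, fun z => ?_⟩
    · simp [hproj, hgx, sq]
    · have h1 : ‖g.comp P‖ ≤ 1 := by
        refine ContinuousLinearMap.opNorm_le_bound _ zero_le_one fun z => ?_
        calc ‖g (P z)‖ ≤ ‖g‖ * ‖P z‖ := g.le_opNorm _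
          _ ≤ 1 * ‖z‖ := by rw [hg1]; exact mul_le_mul_of_nonneg_left (hcontr z) zero_le_one
      have h2 : (1 : ℝ) ≤ ‖g.comp P‖ := by
        have h := (g.comp P).le_opNorm (P y)
        simp only [ContinuousLinearMap.comp_apply, hproj, hgx] at h
        have hp : (0:ℝ) < ‖P y‖ := norm_pos_iff.mpr h0
        simp only [RCLike.ofReal_real_eq_id, id_eq, Real.norm_eq_abs,
          abs_of_nonneg hp.le] at h
        nlinarith
      have hn : ‖g.comp P‖ = 1 := le_antisymm h1 h2
      rw [norm_smul, hn, Real.norm_eq_abs, abs_of_nonneg (norm_nonneg _), mul_one]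
    · simp [hproj]
  · rintro ⟨f, hfx, hfn, hfP⟩
    rcases eq_or_ne x 0 with rfl | hx0
    · exact ⟨0, by simp⟩
    have hxpos : (0:ℝ) < ‖x‖ := norm_pos_iff.mpr hx0
    have hPx : f (P x) = ‖x‖ ^ 2 := by rw [hfP, hfx]
    have key : ∀ y : X, f y = ‖x‖ ^ 2 → ‖y‖ ≤ ‖x‖ → ‖y‖ = ‖x‖ := by
      intro y hy hle
      refine le_antisymm hle ?_
      have : ‖x‖ ^ 2 ≤ ‖f‖ * ‖y‖ := by
        rw [← hy]
        calc f y ≤ |f y| := le_abs_self _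
          _ = ‖f y‖ := rfl
          _ ≤ ‖f‖ * ‖y‖ := f.le_opNorm y
      rw [hfn, sq] at this
      exact le_of_mul_le_mul_left this hxpos
    have hnPx : ‖P x‖ = ‖x‖ := key _ hPx (hcontr x)
    have hmid : ‖x + P x‖ = ‖x‖ + ‖P x‖ := by
      have hle : ‖x + P x‖ ≤ ‖x‖ + ‖P x‖ := norm_add_le _ _
      have hfs : f (x + P x) = 2 * ‖x‖ ^ 2 := by
        rw [map_add, hfx, hPx]; ring
      have : 2 * ‖x‖ ^ 2 ≤ ‖f‖ * ‖x + P x‖ := by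
        rw [← hfs]
        calc f (x + P x) ≤ |f (x + P x)| := le_abs_self _
          _ = ‖f (x + P x)‖ := rfl
          _ ≤ ‖f‖ * ‖x + P x‖ := f.le_opNorm _
      rw [hfn] at this
      have h2 : 2 * ‖x‖ ≤ ‖x + P x‖ := by
        have := le_of_mul_le_mul_left (by linarith [this] : ‖x‖ * (2 * ‖x‖) ≤ ‖x‖ * ‖x + P x‖) hxpos
        linarith
      rw [hnPx]; linarith
    have := eq_of_norm_eq_of_norm_add_eq hnPx.symm hmid
    exact ⟨x, this.symm⟩
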